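/- If a simple graph G on n vertices has a vertex of degree at least 5 and contains no subgraph isomorphic to 2K_{1,2}, then G has at most 3n/2 - 1.5 edges. -/

import Mathlib

/-- If a simple graph on `n` vertices has a vertex of degree at least 5 and contains no
subgraph isomorphic to `2K_{1,2}`, then it has at most `3n/2 - 1.5` edges. -/
theorem stmt1 (n : ℕ) (G : SimpleGraph (Fin n)) [DecidableRel G.Adj]
    (hdeg : ∃ v : Fin n, 5 ≤ G.degree v)
    (h : ¬ ∃ a b c d e f : Fin n, G.Adj a b ∧ G.Adj a c ∧ b ≠ c ∧
      G.Adj d e ∧ G.Adj d f ∧ e ≠ f ∧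
      Disjoint ({a, b, c} : Finset (Fin n)) {d, e, f}) :
    2 * G.edgeFinset.card + 3 ≤ 3 * n := by
  obtain ⟨v, hv⟩ := hdeg
  have key : ∀ u : Fin n, u ≠ v → G.degree u ≤ 2 := by
    intro u hu
    by_contra hdu
    push_neg at hdu
    -- pick two neighbors b, c of u distinct from v
    have h2 : 1 < ((G.neighborFinset u).erase v).card := by
      have h1 : (G.neighborFinset u).card - 1 ≤ ((G.neighborFinset u).erase v).card :=
        Finset.pred_card_le_card_erase
      have : 3 ≤ (G.neighborFinset u).card := by
        rw [G.card_neighborFinset_eq_degree]; omega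
      omega
    obtain ⟨b, hb, c, hc, hbc⟩ := Finset.one_lt_card.mp h2
    have hbv : b ≠ v := Finset.ne_of_mem_erase hb
    have hcv : c ≠ v := Finset.ne_of_mem_erase hc
    have hub : G.Adj u b := (G.mem_neighborFinset u b).mp (Finset.mem_of_mem_erase hb)
    have huc : G.Adj u c := (G.mem_neighborFinset u c).mp (Finset.mem_of_mem_erase hc)
    -- pick two neighbors e, f of v outside {u, b, c}
    have h3 : 1 < ((G.neighborFinset v) \ ({u, b, c} : Finset (Fin n))).card := by
      have h4 : (G.neighborFinset v).card - ({u, b, c} : Finset (Fin n)).card ≤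
          ((G.neighborFinset v) \ ({u, b, c} : Finset (Fin n))).card :=
        Finset.le_card_sdiff _ _
      have h5 : ({u, b, c} : Finset (Fin n)).card ≤ 3 := by
        apply le_trans (Finset.card_insert_le _ _)
        have := Finset.card_insert_le b ({c} : Finset (Fin n))
        simp at this ⊢
        omega
      have h6 : 5 ≤ (G.neighborFinset v).card := by
        rw [G.card_neighborFinset_eq_degree]; omega
      omega
    obtain ⟨e, he, f, hf, hef⟩ := Finset.one_lt_card.mp h3
    obtain ⟨he1, he2⟩ := Finset.mem_sdiff.mp he
    obtain ⟨hf1, hf2⟩ := Finset.mem_sdiff.mp hf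
    have hve : G.Adj v e := (G.mem_neighborFinset v e).mp he1
    have hvf : G.Adj v f := (G.mem_neighborFinset v f).mp hf1
    apply h
    refine ⟨u, b, c, v, e, f, hub, huc, hbc, hve, hvf, hef, ?_⟩
    rw [Finset.disjoint_left]
    intro x hx hx'
    simp only [Finset.mem_insert, Finset.mem_singleton] at hx hx' he2 hf2
    push_neg at he2 hf2
    rcases hx' with rfl | rfl | rfl
    · rcases hx with rfl | rfl | rfl
      · exact hu rfl
      · exact hbv rfl
      · exact hcv rfl
    · rcases hx with rfl | rfl | rfl
      · exact he2.1 rfl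
      · exact he2.2.1 rfl
      · exact he2.2.2 rfl
    · rcases hx with rfl | rfl | rfl
      · exact hf2.1 rfl
      · exact hf2.2.1 rfl
      · exact hf2.2.2 rfl
  -- counting
  have hsum : ∑ u : Fin n, G.degree u = 2 * G.edgeFinset.card :=
    G.sum_degrees_eq_twice_card_edges
  have hn : 0 < n := v.pos
  have hdv : G.degree v ≤ n - 1 := by
    have := G.degree_lt_card_verts v
    simp only [Fintype.card_fin] at this
    omega
  have hsplit : ∑ u : Fin n, G.degree u =
      G.degree v + ∑ u ∈ Finset.univ.erase v, G.degree u := by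
    rw [add_comm, Finset.sum_erase_add _ _ (Finset.mem_univ v)]
  have hrest : ∑ u ∈ Finset.univ.erase v, G.degree u ≤ 2 * (n - 1) := by
    calc ∑ u ∈ Finset.univ.erase v, G.degree u
        ≤ ∑ _u ∈ Finset.univ.erase v, 2 :=
          Finset.sum_le_sum (fun u hu => key u (Finset.ne_of_mem_erase hu))
      _ = (Finset.univ.erase v).card * 2 := by rw [Finset.sum_const, smul_eq_mul]
      _ = 2 * (n - 1) := by
          rw [Finset.card_erase_of_mem (Finset.mem_univ v)]
          simp [Fintype.card_fin, Nat.mul_comm]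
  omega
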